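/- arXiv:2205.15378 — 7 statements merged into one kernel-verified Lean document; each statement's English description precedes it below -/
import Mathlib

section
/- Let P be a finite poset containing k pairwise distinct up-single elements x_1, …, x_k. Then |End(P)| ≥ k · |Aut(P)|, i.e., the number of order-preserving maps P → P is at least k times the number of order-preserving bijections P → P. -/
/-- A monotone bijection of a finite poset reflects the order. -/
lemma monotone_bijective_reflect {P : Type*} [PartialOrder P] [Fintype P]
    {f : P → P} (hm : Monotone f) (hb : Function.Bijective f)
    {a b : P} (h : f a ≤ f b) : a ≤ b := by
  classical
  set R : Finset (P × P) := Finset.univ.filter (fun p => p.1 ≤ p.2) with hR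
  set g : P × P → P × P := Prod.map f f with hg
  have hginj : Function.Injective g := Function.Injective.prodMap hb.1 hb.1
  have hsub : R.image g ⊆ R := by
    intro p hp
    simp only [Finset.mem_image] at hp
    obtain ⟨q, hq, rfl⟩ := hp
    simp only [hR, Finset.mem_filter, Finset.mem_univ, true_and] at hq ⊢
    exact hm hq
  have hcard : R.card ≤ (R.image g).card := by
    rw [Finset.card_image_of_injective _ hginj]
  have heq : R.image g = R := Finset.eq_of_subset_of_card_le hsub hcard
  have hmem : (f a, f b) ∈ R := by
    simp [hR, h]
  rw [← heq] at hmem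
  simp only [Finset.mem_image] at hmem
  obtain ⟨q, hq, hqe⟩ := hmem
  have h1 : f q.1 = f a := congrArg Prod.fst hqe
  have h2 : f q.2 = f b := congrArg Prod.snd hqe
  have := hb.1 h1
  have := hb.1 h2
  simp only [hR, Finset.mem_filter] at hq
  rw [← hb.1 h1, ← hb.1 h2]
  exact hq.2

/-- If a finite poset `P` has `k` distinct up-single elements, then
`|End(P)| ≥ k · |Aut(P)|`. -/
theorem card_end_ge_upSingles_mul_card_aut
    (P : Type*) [PartialOrder P] [Fintype P] (k : ℕ) (s : Finset P)
    (hcard : s.card = k) (hup : ∀ x ∈ s, ∃! y : P, x ⋖ y) :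
    k * Nat.card {f : P → P // Monotone f ∧ Function.Bijective f}
      ≤ Nat.card {f : P → P // Monotone f} := by
  classical
  haveI : LocallyFiniteOrder P := Fintype.toLocallyFiniteOrder
  subst hcard
  -- choose the unique cover of each element of s
  choose! y hy hyu using hup
  -- key: anything above x∈s is above its cover
  have hcov : ∀ x ∈ s, ∀ b, x < b → y x ≤ b := by
    intro x hx b hb
    obtain ⟨c, hc, hcb⟩ := exists_covBy_le_of_lt hb
    rw [← hyu x hx c hc]
    exact hcb
  have hlt : ∀ x ∈ s, x < y x := fun x hx => (hy x hx).1
  -- the bump map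
  set U : P → P → P := fun x z => if z = x then y x else z with hU
  have hUmono : ∀ x ∈ s, Monotone (U x) := by
    intro x hx a b hab
    simp only [hU]
    by_cases hax : a = x
    · subst hax
      by_cases hbx : b = a
      · simp [hbx]
      · simp only [if_pos rfl, if_neg hbx]
        exact hcov a hx b (lt_of_le_of_ne hab (Ne.symm hbx))
    · by_cases hbx : b = x
      · subst hbx
        simp only [if_neg hax, if_pos rfl]
        exact hab.trans (hlt b hx).le
      · simp [hax, hbx, hab]
  -- the injection
  set F : s × {f : P → P // Monotone f ∧ Function.Bijective f} →
      {f : P → P // Monotone f} :=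
    fun p => ⟨U p.1 ∘ p.2.1, (hUmono p.1 p.1.2).comp p.2.2.1⟩ with hF
  have hUrange : ∀ x ∈ s, ∀ z, U x z ≠ x := by
    intro x hx z
    simp only [hU]
    by_cases hz : z = x
    · simp only [hz, if_pos rfl]
      exact (hlt x hx).ne'
    · simp only [if_neg hz]
      exact hz
  have hFinj : Function.Injective F := by
    rintro ⟨⟨x, hx⟩, ⟨φ, hφm, hφb⟩⟩ ⟨⟨x', hx'⟩, ⟨φ', hφ'm, hφ'b⟩⟩ heq
    simp only [hF, Subtype.mk.injEq] at heq
    have hfun : ∀ z, U x (φ z) = U x' (φ' z) := fun z => congrFun heq z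
    -- first x = x'
    have hxx : x = x' := by
      by_contra hne
      obtain ⟨z, hz⟩ := hφ'b.2 x
      have h1 : U x' (φ' z) = x := by
        simp only [hU, hz]
        rw [if_neg hne]
      exact hUrange x hx (φ z) ((hfun z).trans h1)
    subst hxx
    -- now φ = φ'
    have hφeq : φ = φ' := by
      funext z
      by_contra hne
      have h := hfun z
      -- U x a = U x b with a ≠ b forces {a,b} = {x, y x}
      have key : ∀ a b : P, U x a = U x b → a ≠ b → 
          (a = x ∧ b = y x) ∨ (a = y x ∧ b = x) := by
        intro a b hab hne2
        simp only [hU] at hab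
        by_cases ha : a = x
        · subst ha
          by_cases hb : b = a
          · exact absurd hb.symm hne2
          · rw [if_pos rfl, if_neg hb] at hab
            exact Or.inl ⟨rfl, hab.symm⟩
        · by_cases hb : b = x
          · subst hb
            rw [if_neg ha, if_pos rfl] at hab
            exact Or.inr ⟨hab, rfl⟩
          · rw [if_neg ha, if_neg hb] at hab
            exact absurd hab hne2
      rcases key (φ z) (φ' z) h hne with ⟨h1, h2⟩ | ⟨h1, h2⟩
      · -- φ z = x, φ' z = y x
        obtain ⟨w, hw⟩ := hφ'b.2 x
        have hzw : z ≠ w := by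
          intro hzw; rw [hzw, hw] at h2; exact (hlt x hx).ne h2
        have hφw : φ w = y x := by
          have h4 : U x (φ w) = U x (φ' w) := hfun w
          rw [hw] at h4
          rcases eq_or_ne (φ w) x with he | he
          · exact absurd (hφb.1 (he.trans h1.symm)).symm hzw
          · rcases key (φ w) x h4 he with ⟨ha, _⟩ | ⟨ha, _⟩
            · exact absurd ha he
            · exact ha
        -- φ z = x < y x = φ w, so z < w; but φ' z = y x > x = φ' w
        have hzw2 : z ≤ w := by
          apply monotone_bijective_reflect hφm hφb
          rw [h1, hφw]; exact (hlt x hx).le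
        have : φ' z ≤ φ' w := hφ'm hzw2
        rw [h2, hw] at this
        exact absurd this (hlt x hx).not_ge
      · -- symmetric: φ z = y x, φ' z = x
        obtain ⟨w, hw⟩ := hφb.2 x
        have hzw : z ≠ w := by
          intro hzw; rw [hzw, hw] at h1; exact (hlt x hx).ne h1
        have hφ'w : φ' w = y x := by
          have h4 : U x (φ w) = U x (φ' w) := hfun w
          rw [hw] at h4
          rcases eq_or_ne (φ' w) x with he | he
          · exact absurd (hφ'b.1 (he.trans h2.symm)).symm hzw
          · rcases key x (φ' w) h4 (Ne.symm he) with ⟨_, hb⟩ | ⟨_, hb⟩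
            · exact hb
            · exact absurd hb.symm (Ne.symm he)
        have hzw2 : z ≤ w := by
          apply monotone_bijective_reflect hφ'm hφ'b
          rw [h2, hφ'w]; exact (hlt x hx).le
        have : φ z ≤ φ w := hφm hzw2
        rw [h1, hw] at this
        exact absurd this (hlt x hx).not_ge
    subst hφeq
    rfl
  calc s.card * Nat.card {f : P → P // Monotone f ∧ Function.Bijective f}
      = Nat.card (s × {f : P → P // Monotone f ∧ Function.Bijective f}) := by
        rw [Nat.card_prod, Nat.card_eq_fintype_card (α := s), Fintype.card_coe]
    _ ≤ Nat.card {f : P → P // Monotone f} := Nat.card_le_card_of_injective F hFinj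
end

section
/- Let P be a finite poset and let a, b be distinct elements of P such that b is an older sibling of a: every element covered by a is also covered by b, and every element covering a also covers b, and a and b are incomparable. Then the map V_{a,b} defined by V_{a,b}(a) = b and V_{a,b}(z) = z for z ≠ a is an endomorphism of P. -/
/-- If `b` is an older sibling of `a` (distinct, incomparable, `b` covers every
element that `a` covers and is covered by every element covering `a`), then the
map sending `a` to `b` and fixing everything else is an endomorphism. -/
theorem olderSibling_contraction_monotone
    (P : Type*) [PartialOrder P] [Fintype P] [DecidableEq P] (a b : P)
    (hne : a ≠ b) (hinc : ¬ a ≤ b ∧ ¬ b ≤ a)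
    (hdown : ∀ z : P, z ⋖ a → z ⋖ b) (hup : ∀ z : P, a ⋖ z → b ⋖ z) :
    Monotone (fun z : P => if z = a then b else z) := by
  classical
  letI : LocallyFiniteOrder P := Fintype.toLocallyFiniteOrder
  intro x y hxy
  by_cases hx : x = a <;> by_cases hy : y = a <;> simp [hx, hy]
  · -- x = a, y ≠ a, a ≤ y, need b ≤ y
    have hlt : a < y := lt_of_le_of_ne (hx ▸ hxy) (Ne.symm hy)
    obtain ⟨z, hz, hzy⟩ := hlt.exists_covby_le
    exact ((hup z hz).le).trans hzy
  · -- y = a, x ≤ a, x ≠ a, need x ≤ b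
    have hlt : x < a := lt_of_le_of_ne (hy ▸ hxy) hx
    obtain ⟨z, hxz, hz⟩ := hlt.exists_le_covby
    exact hxz.trans (hdown z hz).le
  · exact hxy
end

section
/- Let P be a finite poset containing k distinct elements a_1, …, a_k such that each a_i has an older sibling b_i. Then |End(P)| ≥ (k/2) · |Aut(P)|. -/
/-- If a finite poset `P` contains `k` distinct elements each having an older
sibling, then `|End(P)| ≥ (k/2) · |Aut(P)|`. -/
theorem card_end_ge_half_siblings_mul_card_aut
    (P : Type*) [PartialOrder P] [Fintype P] (k : ℕ) (s : Finset P)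
    (hcard : s.card = k)
    (hsib : ∀ a ∈ s, ∃ b : P, a ≠ b ∧ ¬ a ≤ b ∧ ¬ b ≤ a ∧
      (∀ z : P, z ⋖ a → z ⋖ b) ∧ (∀ z : P, a ⋖ z → b ⋖ z)) :
    k * Nat.card {f : P → P // Monotone f ∧ Function.Bijective f}
      ≤ 2 * Nat.card {f : P → P // Monotone f} := by
  classical
  rcases isEmpty_or_nonempty P with hP | hP
  · have hs : s = ∅ := Finset.eq_empty_of_isEmpty s
    subst hs; simp at hcard; subst hcard; simp
  subst hcard
  letI := Fintype.toLocallyFiniteOrder (α := P)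
  choose! b hne hnab hnba hcov1 hcov2 using hsib
  -- the "shift" endomorphism associated to a
  set F : P → P → P := fun a x => if x = a then b a else x with hF
  have hmono : ∀ a ∈ s, Monotone (F a) := by
    intro a ha x y hxy
    by_cases hx : x = a
    · by_cases hy : y = a
      · simp [hF, hx, hy]
      · subst hx
        have hlt : x < y := lt_of_le_of_ne hxy (fun h => hy h.symm)
        obtain ⟨z, hz, hzy⟩ := exists_covBy_le_of_lt hlt
        have hbz := hcov2 x ha z hz
        simp only [hF, if_pos rfl, if_neg hy]
        exact le_trans hbz.lt.le hzy
    · by_cases hy : y = a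
      · subst hy
        have hlt : x < y := lt_of_le_of_ne hxy hx
        obtain ⟨z, hxz, hz⟩ := exists_le_covBy_of_lt hlt
        have hzb := hcov1 y ha z hz
        simp only [hF, if_neg hx, if_pos rfl]
        exact le_trans hxz hzb.lt.le
      · simpa [hF, hx, hy] using hxy
  have hFne : ∀ a ∈ s, ∀ x, F a x ≠ a := by
    intro a ha x hx
    by_cases h : x = a
    · rw [hF] at hx; simp only [if_pos h] at hx
      exact hne a ha hx.symm
    · rw [hF] at hx; simp only [if_neg h] at hx; exact h hx
  have hFeq : ∀ a ∈ s, ∀ x, F a x = b a → x = a ∨ x = b a := by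
    intro a ha x hx
    by_cases h : x = a
    · exact Or.inl h
    · rw [hF] at hx; simp only [if_neg h] at hx; exact Or.inr hx
  have hFb : ∀ a ∈ s, F a (b a) = b a := by
    intro a ha
    rw [hF]; simp only [if_neg (Ne.symm (hne a ha))]
  have hFa : ∀ a, F a a = b a := by intro a; rw [hF]; simp
  set S : Finset (P × {f : P → P // Monotone f ∧ Function.Bijective f}) :=
    s ×ˢ Finset.univ with hS
  set Φ : P × {f : P → P // Monotone f ∧ Function.Bijective f} → (P → P) :=
    fun p => F p.1 ∘ p.2.1 with hΦ
  set t : Finset (P → P) := Finset.univ.filter Monotone with ht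
  have hmaps : ∀ p ∈ S, Φ p ∈ t := by
    intro p hp
    rw [hS, Finset.mem_product] at hp
    rw [ht, Finset.mem_filter]
    exact ⟨Finset.mem_univ _, (hmono p.1 hp.1).comp p.2.2.1⟩
  -- elements of a fiber have the same first component
  have hfst : ∀ h : P → P, ∀ p ∈ S, ∀ q ∈ S, Φ p = h → Φ q = h → p.1 = q.1 := by
    intro h p hp q hq hph hqh
    rw [hS, Finset.mem_product] at hp hq
    by_contra hne'
    -- q.1 ≠ p.1, so q.1 is in the range of Φ p = h, but q.1 is not in range of Φ q
    obtain ⟨x, hx⟩ := p.2.2.2.2 q.1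
    have h1 : h x = q.1 := by
      rw [← hph, hΦ]
      simp only [Function.comp_apply, hx, hF]
      rw [if_neg (fun hh => hne' hh.symm)]
    have h2 : h x ≠ q.1 := by
      rw [← hqh, hΦ]
      exact hFne q.1 hq.1 _
    exact h2 h1
  have hfiber : ∀ h ∈ t, (S.filter (fun p => Φ p = h)).card ≤ 2 := by
    intro h _
    set fib := S.filter (fun p => Φ p = h) with hfib
    rcases Finset.eq_empty_or_nonempty fib with he | ⟨p₀, hp₀⟩
    · simp [he]
    have hp₀' := hp₀
    rw [hfib, Finset.mem_filter] at hp₀'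
    obtain ⟨hp₀S, hp₀h⟩ := hp₀'
    have hp₀s : p₀.1 ∈ s := by
      rw [hS, Finset.mem_product] at hp₀S; exact hp₀S.1
    set a₀ := p₀.1 with ha₀
    set g₀ := p₀.2.1 with hg₀
    have hg₀inj : Function.Injective g₀ := p₀.2.2.2.1
    have hg₀surj : Function.Surjective g₀ := p₀.2.2.2.2
    set T : Finset P := {Function.invFun g₀ a₀, Function.invFun g₀ (b a₀)} with hT
    have hTcard : T.card ≤ 2 := Finset.card_insert_le _ _ |>.trans (by simp)
    refine le_trans (Finset.card_le_card_of_injOn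
      (fun p => Function.invFun p.2.1 p.1) ?_ ?_) hTcard
    · -- maps to T
      intro p hp
      rw [hfib, Finset.mem_coe, Finset.mem_filter] at hp
      obtain ⟨hpS, hph⟩ := hp
      have hpa : p.1 = a₀ := hfst h p hpS p₀ hp₀S hph hp₀h
      set g := p.2.1 with hg
      have hgsurj : Function.Surjective g := p.2.2.2.2
      set x := Function.invFun g p.1 with hx
      have hgx : g x = p.1 := Function.invFun_eq (hgsurj p.1)
      have hhx : h x = b a₀ := by
        rw [← hph, hΦ]
        simp only [Function.comp_apply]
        rw [← hg, hgx, hpa, hFa]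
      have hhx' : F a₀ (g₀ x) = b a₀ := by
        rw [← hhx, ← hp₀h]; rfl
      show x ∈ T
      rcases hFeq a₀ hp₀s (g₀ x) hhx' with hc | hc
      · rw [hT, Finset.mem_insert]
        left
        rw [← hc]
        exact (Function.leftInverse_invFun hg₀inj x).symm
      · rw [hT, Finset.mem_insert, Finset.mem_singleton]
        right
        rw [← hc]
        exact (Function.leftInverse_invFun hg₀inj x).symm
    · -- injective on fib
      intro p hp q hq hpq
      rw [Finset.mem_coe, hfib, Finset.mem_filter] at hp hq
      have hpq' : Function.invFun (p.2 : P → P) p.1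
          = Function.invFun (q.2 : P → P) q.1 := hpq
      obtain ⟨hpS, hph⟩ := hp
      obtain ⟨hqS, hqh⟩ := hq
      have hpa : p.1 = q.1 := hfst h p hpS q hqS hph hqh
      have hpS' := hpS
      rw [hS, Finset.mem_product] at hpS'
      have hps : p.1 ∈ s := hpS'.1
      set g := p.2.1 with hg
      set g' := q.2.1 with hg'
      have hgsurj : Function.Surjective g := p.2.2.2.2
      have hg'surj : Function.Surjective g' := q.2.2.2.2
      have hginj : Function.Injective g := p.2.2.2.1
      have hg'inj : Function.Injective g' := q.2.2.2.1
      set x := Function.invFun g p.1 with hx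
      have hgx : g x = p.1 := Function.invFun_eq (hgsurj p.1)
      have hg'x : g' x = p.1 := by
        rw [hpa]
        have hxx : Function.invFun g' q.1 = x := hpq'.symm
        rw [← hxx]
        exact Function.invFun_eq (hg'surj q.1)
      have hgg' : g = g' := by
        funext y
        by_cases hy : y = x
        · rw [hy, hgx, hg'x]
        · have h1 : g y ≠ p.1 := fun hc => hy (hginj (hc.trans hgx.symm))
          have h2 : g' y ≠ p.1 := fun hc => hy (hg'inj (hc.trans hg'x.symm))
          have e1 : h y = g y := by
            rw [← hph, hΦ]
            simp only [Function.comp_apply, ← hg, hF]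
            rw [if_neg h1]
          have e2 : h y = g' y := by
            rw [← hqh, hΦ]
            simp only [Function.comp_apply, ← hg', hF]
            rw [if_neg (by rw [← hpa]; exact h2)]
          rw [← e1, ← e2]
      have : p.2 = q.2 := Subtype.ext (by rw [← hg, ← hg', hgg'])
      exact Prod.ext hpa this
  have hmain : S.card ≤ 2 * t.card :=
    Finset.card_le_mul_card_image_of_maps_to hmaps 2 hfiber
  have hScard : S.card = s.card * Fintype.card
      {f : P → P // Monotone f ∧ Function.Bijective f} := by
    rw [hS, Finset.card_product, Finset.card_univ]
  have htcard : t.card = Fintype.card {f : P → P // Monotone f} := by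
    rw [ht, Fintype.card_subtype]
  rw [Nat.card_eq_fintype_card, Nat.card_eq_fintype_card, ← hScard, ← htcard]
  exact hmain
end

section
/- Let P be a finite graded poset with rank function r, and suppose every Whitney number w_i (the number of elements of rank i) is at most 3. Suppose no element of P is up-single or down-single except possibly elements of minimal or maximal rank (i.e., every non-maximal element is covered by at least two elements and every non-minimal element covers at least two elements). Then for any s, t ∈ P with r(t) = r(s) + 2, s < t. -/
/-- In a finite graded poset with all Whitney numbers at most 3, in which every
element of non-maximal rank is covered by at least two elements and every element
of non-minimal rank covers at least two elements, any two elements `s, t` with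
`r(t) = r(s) + 2` satisfy `s < t`. -/
theorem whidth_three_two_ranks_apart_comparable
    (P : Type*) [PartialOrder P] [Fintype P] (rk : P → ℕ) (n : ℕ)
    (hcov : ∀ x y : P, x ⋖ y → rk y = rk x + 1)
    (hmin : ∀ x : P, (∀ y : P, ¬ y < x) → rk x = 0)
    (hle : ∀ x : P, rk x ≤ n)
    (hwhitney : ∀ i : ℕ, Nat.card {x : P // rk x = i} ≤ 3)
    (hup2 : ∀ x : P, rk x < n → 2 ≤ Nat.card {y : P // x ⋖ y})
    (hdown2 : ∀ x : P, 0 < rk x → 2 ≤ Nat.card {y : P // y ⋖ x})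
    (s t : P) (hst : rk t = rk s + 2) :
    s < t := by
  classical
  have hsn : rk s < n := by have := hle t; omega
  have htpos : 0 < rk t := by omega
  set A : Finset P := Finset.univ.filter (fun y => s ⋖ y) with hAdef
  set B : Finset P := Finset.univ.filter (fun y => y ⋖ t) with hBdef
  set L : Finset P := Finset.univ.filter (fun y => rk y = rk s + 1) with hLdef
  have hA : 2 ≤ A.card := by
    have h := hup2 s hsn
    rwa [Nat.card_eq_fintype_card, Fintype.card_subtype] at h
  have hB : 2 ≤ B.card := by
    have h := hdown2 t htpos
    rwa [Nat.card_eq_fintype_card, Fintype.card_subtype] at h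
  have hL : L.card ≤ 3 := by
    have h := hwhitney (rk s + 1)
    rwa [Nat.card_eq_fintype_card, Fintype.card_subtype] at h
  have hAL : A ⊆ L := by
    intro y hy
    simp only [hAdef, hLdef, Finset.mem_filter, Finset.mem_univ, true_and] at hy ⊢
    exact hcov s y hy
  have hBL : B ⊆ L := by
    intro y hy
    simp only [hBdef, hLdef, Finset.mem_filter, Finset.mem_univ, true_and] at hy ⊢
    have := hcov y t hy
    omega
  have hunion : (A ∪ B).card ≤ 3 :=
    le_trans (Finset.card_le_card (Finset.union_subset hAL hBL)) hL
  have hinter : (A ∩ B).Nonempty := by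
    rw [← Finset.card_pos]
    have := Finset.card_union_add_card_inter A B
    omega
  obtain ⟨y, hy⟩ := hinter
  rw [Finset.mem_inter, hAdef, hBdef, Finset.mem_filter, Finset.mem_filter] at hy
  exact lt_trans hy.1.2.lt hy.2.2.lt
end

section
/- Let P be a finite graded poset with every Whitney number at most 4, and suppose every element of non-minimal rank covers at least two elements. If x ∈ P is smaller than at least three elements of rank r, then x is smaller than every element of rank r + 1. -/
/-- In a finite graded poset with all Whitney numbers at most 4 in which every
element of nonzero rank covers at least two elements, if `x` is smaller than at
least three elements of rank `r`, then `x` is smaller than every element of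
rank `r + 1`. -/
theorem whidth_four_above_three_implies_above_all
    (P : Type*) [PartialOrder P] [Fintype P] (rk : P → ℕ)
    (hcov : ∀ x y : P, x ⋖ y → rk y = rk x + 1)
    (hmin : ∀ x : P, (∀ y : P, ¬ y < x) → rk x = 0)
    (hwhitney : ∀ i : ℕ, Nat.card {x : P // rk x = i} ≤ 4)
    (hdown2 : ∀ y : P, rk y ≠ 0 → 2 ≤ Nat.card {z : P // z ⋖ y})
    (x : P) (r : ℕ) (a b c : P)
    (ha : rk a = r) (hb : rk b = r) (hc : rk c = r)
    (hab : a ≠ b) (hac : a ≠ c) (hbc : b ≠ c)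
    (hxa : x < a) (hxb : x < b) (hxc : x < c) :
    ∀ y : P, rk y = r + 1 → x < y := by
  classical
  intro y hy
  have hy0 : rk y ≠ 0 := by omega
  have h2 := hdown2 y hy0
  rw [Nat.card_eq_fintype_card] at h2
  obtain ⟨⟨z1, hz1⟩, ⟨z2, hz2⟩, hne⟩ :=
    Fintype.exists_pair_of_one_lt_card (by omega : 1 < Fintype.card {z : P // z ⋖ y})
  have hz12 : z1 ≠ z2 := fun h => hne (Subtype.ext h)
  have hrz1 : rk z1 = r := by have := hcov z1 y hz1; omega
  have hrz2 : rk z2 = r := by have := hcov z2 y hz2; omega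
  by_cases hmem : z1 = a ∨ z1 = b ∨ z1 = c
  · rcases hmem with h | h | h <;> subst h
    · exact lt_trans hxa hz1.lt
    · exact lt_trans hxb hz1.lt
    · exact lt_trans hxc hz1.lt
  by_cases hmem2 : z2 = a ∨ z2 = b ∨ z2 = c
  · rcases hmem2 with h | h | h <;> subst h
    · exact lt_trans hxa hz2.lt
    · exact lt_trans hxb hz2.lt
    · exact lt_trans hxc hz2.lt
  push_neg at hmem hmem2
  obtain ⟨h1a, h1b, h1c⟩ := hmem
  obtain ⟨h2a, h2b, h2c⟩ := hmem2
  have hcard := hwhitney r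
  rw [Nat.card_eq_fintype_card, Fintype.card_subtype] at hcard
  have hsub : ({a, b, c, z1, z2} : Finset P) ⊆ Finset.univ.filter (fun t => rk t = r) := by
    intro t ht
    simp only [Finset.mem_insert, Finset.mem_singleton] at ht
    rcases ht with h | h | h | h | h <;> subst h <;> simp [ha, hb, hc, hrz1, hrz2]
  have hcard5 : ({a, b, c, z1, z2} : Finset P).card = 5 := by
    rw [Finset.card_insert_of_notMem (by simp [hab, hac, Ne.symm h1a, Ne.symm h2a]),
        Finset.card_insert_of_notMem (by simp [hbc, Ne.symm h1b, Ne.symm h2b]),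
        Finset.card_insert_of_notMem (by simp [Ne.symm h1c, Ne.symm h2c]),
        Finset.card_insert_of_notMem (by simp [hz12]),
        Finset.card_singleton]
  have := Finset.card_le_card hsub
  omega
end

section
/- Let P be a finite graded poset and suppose x ∈ P is a central element for parameters r_1, r_2: a < x for every a with r(x) − r(a) = r_1 and x < b for every b with r(b) − r(x) = r_2. Let I be the set of elements z with r(x) − r_1 < r(z) < r(x) + r_2 (the interior). Then the map F_x sending every element of I to x and fixing all other elements is an endomorphism of P. -/
private lemma exists_covBy_step {P : Type*} [PartialOrder P] [Fintype P]
    {z w : P} (h : z < w) : ∃ c : P, z ⋖ c ∧ c ≤ w := by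
  classical
  have hne : (Finset.univ.filter (fun c => z < c ∧ c ≤ w)).Nonempty :=
    ⟨w, by simp [h]⟩
  obtain ⟨c, hc, hmin⟩ := Finset.exists_minimal hne
  simp only [Finset.mem_filter, Finset.mem_univ, true_and] at hc
  refine ⟨c, ⟨hc.1, fun d hzd hdc => ?_⟩, hc.2⟩
  exact hdc.not_ge (hmin (by simp [Finset.mem_filter, hzd, hdc.le.trans hc.2]) hdc.le)

/-- On an interval `[z,w]` every rank between `rk z` and `rk w` is attained. -/
private lemma exists_rank_between {P : Type*} [PartialOrder P] [Fintype P]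
    (rk : P → ℕ) (hcov : ∀ x y : P, x ⋖ y → rk y = rk x + 1) :
    ∀ n {z w : P}, z ≤ w → ∀ k, rk z ≤ k → k ≤ rk w → k - rk z ≤ n →
      ∃ c : P, z ≤ c ∧ c ≤ w ∧ rk c = k := by
  intro n
  induction n with
  | zero =>
    intro z w hzw k hk1 hk2 hk3
    exact ⟨z, le_refl z, hzw, by omega⟩
  | succ n ih =>
    intro z w hzw k hk1 hk2 hk3
    rcases eq_or_lt_of_le hk1 with h | h
    · exact ⟨z, le_refl z, hzw, h⟩
    · have hzw' : z < w := lt_of_le_of_ne hzw (by rintro rfl; omega)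
      obtain ⟨c, hc, hcw⟩ := exists_covBy_step hzw'
      have hrc : rk c = rk z + 1 := hcov _ _ hc
      obtain ⟨d, hd1, hd2, hd3⟩ := ih hcw k (by omega) hk2 (by omega)
      exact ⟨d, hc.le.trans hd1, hd2, hd3⟩

open Classical in
private lemma rk_mono {P : Type*} [PartialOrder P] [Fintype P]
    (rk : P → ℕ) (hcov : ∀ x y : P, x ⋖ y → rk y = rk x + 1) :
    ∀ n {z w : P}, z ≤ w → Fintype.card {c : P // z ≤ c ∧ c ≤ w} ≤ n →
      rk z ≤ rk w := by
  intro n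
  induction n with
  | zero =>
    intro z w hzw hcard
    exact absurd hcard (by
      simp only [not_le]
      exact Fintype.card_pos_iff.mpr ⟨⟨z, le_refl z, hzw⟩⟩)
  | succ n ih =>
    intro z w hzw hcard
    rcases eq_or_lt_of_le hzw with rfl | h
    · exact le_refl _
    · obtain ⟨c, hc, hcw⟩ := exists_covBy_step h
      have hrc : rk c = rk z + 1 := hcov _ _ hc
      have hsub : Fintype.card {d : P // c ≤ d ∧ d ≤ w} < Fintype.card {d : P // z ≤ d ∧ d ≤ w} := by
        apply Fintype.card_lt_of_injective_of_notMem
          (fun d => ⟨d.1, hc.le.trans d.2.1, d.2.2⟩)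
          (fun a b hab => Subtype.ext (by
            have := congrArg Subtype.val hab; simpa using this))
          (b := ⟨z, le_refl z, hzw⟩)
        rintro ⟨⟨d, hd1, hd2⟩, hd3⟩
        have hdz : d = z := by simpa using congrArg Subtype.val hd3
        subst hdz
        exact absurd (hd1.trans_lt hc.lt) (lt_irrefl c)
      have := ih hcw (by omega)
      omega

/-- If `x` is a central element of a finite graded poset `P` for parameters
`r₁, r₂` (above everything `r₁` ranks below it and below everything `r₂` ranks
above it), then contracting the interior (elements of strictly intermediate
rank) to `x` and fixing everything else is an endomorphism of `P`. -/
theorem central_element_contraction_monotone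
    (P : Type*) [PartialOrder P] [Fintype P] (rk : P → ℕ)
    (hcov : ∀ x y : P, x ⋖ y → rk y = rk x + 1)
    (hmin : ∀ x : P, (∀ y : P, ¬ y < x) → rk x = 0)
    (x : P) (r₁ r₂ : ℕ) (hr₁ : 0 < r₁) (hr₂ : 0 < r₂) (hr₁x : r₁ ≤ rk x)
    (hbelow : ∀ a : P, rk a = rk x - r₁ → a < x)
    (habove : ∀ b : P, rk b = rk x + r₂ → x < b)
    (hne₁ : ∃ a : P, rk a = rk x - r₁) (hne₂ : ∃ b : P, rk b = rk x + r₂) :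
    Monotone (fun z : P =>
      if rk x - r₁ < rk z ∧ rk z < rk x + r₂ then x else z) := by
  intro z w hzw
  have hrk : rk z ≤ rk w := rk_mono rk hcov _ hzw (le_refl _)
  simp only
  split_ifs with h1 h2 h2
  · exact le_refl x
  · -- z interior, w not: rk w ≥ rk x + r₂
    have hw : rk x + r₂ ≤ rk w := by
      rcases not_and_or.mp h2 with h | h <;> omega
    obtain ⟨b, hzb, hbw, hb⟩ := exists_rank_between rk hcov (rk x + r₂ - rk z)
      hzw (rk x + r₂) (le_of_lt h1.2) hw (le_refl _)
    exact ((habove b hb).le.trans hbw)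
  · -- z not interior, w interior: need z ≤ x; rk z ≤ rk x - r₁
    have hz : rk z ≤ rk x - r₁ := by
      rcases not_and_or.mp h1 with h | h <;> omega
    obtain ⟨a, hza, haw, ha⟩ := exists_rank_between rk hcov (rk x - r₁ - rk z)
      hzw (rk x - r₁) hz (le_of_lt h2.1) (le_refl _)
    exact hza.trans (hbelow a ha).le
  · exact hzw
end

section
/- Let P be a finite poset with a minimum element 0 and at least three elements. Then |Aut(P)| / |End(P)| ≤ 1/3. -/
/-- Injectivity of `σ ↦ g ∘ σ` on bijections, when `g` only merges `p` with a
point `q` that is fixed by both bijections. -/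
lemma comp_inj_aux {P : Type*} [PartialOrder P] (g : P → P) (p q : P) (hpq : p ≠ q)
    (hfib : ∀ z, g z = g p → z = p ∨ z = q)
    (hinj : ∀ z w, g z = g w → z ≠ p → w ≠ p → z = w)
    (σ τ : P → P) (hσ : Function.Bijective σ) (hτ : Function.Bijective τ)
    (hσq : σ q = q) (hτq : τ q = q)
    (h : g ∘ σ = g ∘ τ) : σ = τ := by
  funext x
  have hx : g (σ x) = g (τ x) := congrFun h x
  by_cases h1 : σ x = p
  · rcases hfib (τ x) (by rw [← hx, h1]) with h2 | h2
    · rw [h1, h2]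
    · have hxq : x = q := hτ.1 (by rw [h2, hτq])
      rw [hxq] at h1
      exact absurd (hσq.symm.trans h1) (Ne.symm hpq)
  · by_cases h2 : τ x = p
    · rcases hfib (σ x) (by rw [hx, h2]) with h3 | h3
      · exact absurd h3 h1
      · have hxq : x = q := hσ.1 (by rw [h3, hσq])
        rw [hxq] at h2
        exact absurd (hτq.symm.trans h2) (Ne.symm hpq)
    · exact hinj _ _ hx h1 h2

/-- Monotonicity of the map collapsing an atom `a` over `q` down to `q`. -/
lemma e_mono {P : Type*} [PartialOrder P] [DecidableEq P] (q a : P) (hq : q ≤ a)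
    (hatom : ∀ z, z ≤ a → z = q ∨ z = a) :
    Monotone (fun z => if z = a then q else z) := by
  intro x y hxy
  dsimp only
  by_cases hx : x = a
  · by_cases hy : y = a
    · rw [if_pos hx, if_pos hy]
    · rw [if_pos hx, if_neg hy]
      exact hq.trans (hx.symm.le.trans hxy)
  · by_cases hy : y = a
    · rcases hatom x (hxy.trans hy.le) with h | h
      · rw [if_neg hx, if_pos hy, h]
      · exact absurd h hx
    · rw [if_neg hx, if_neg hy]
      exact hxy

/-- The counting core: three injective families with pairwise disjoint images. -/
lemma main_aux {P : Type*} [PartialOrder P] [Fintype P]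
    (a p₂ : P) (g₁ g₂ : P → P) (hg₁m : Monotone g₁) (hg₂m : Monotone g₂)
    (hg₁a : ∀ z, g₁ z ≠ a) (hg₂a : g₂ a = a) (hg₂p : ∀ z, g₂ z ≠ p₂)
    (hinj₁ : ∀ σ τ : P → P, Monotone σ → Function.Bijective σ →
      Monotone τ → Function.Bijective τ → g₁ ∘ σ = g₁ ∘ τ → σ = τ)
    (hinj₂ : ∀ σ τ : P → P, Monotone σ → Function.Bijective σ →
      Monotone τ → Function.Bijective τ → g₂ ∘ σ = g₂ ∘ τ → σ = τ) :
    3 * Nat.card {f : P → P // Monotone f ∧ Function.Bijective f}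
      ≤ Nat.card {f : P → P // Monotone f} := by
  classical
  have hΦ : Function.Injective
      (Sum.elim (fun σ : {f : P → P // Monotone f ∧ Function.Bijective f} =>
          (⟨σ.1, σ.2.1⟩ : {f : P → P // Monotone f}))
        (Sum.elim (fun σ : {f : P → P // Monotone f ∧ Function.Bijective f} =>
            (⟨g₁ ∘ σ.1, hg₁m.comp σ.2.1⟩ : {f : P → P // Monotone f}))
          (fun σ : {f : P → P // Monotone f ∧ Function.Bijective f} =>
            (⟨g₂ ∘ σ.1, hg₂m.comp σ.2.1⟩ : {f : P → P // Monotone f})))) := by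
    rintro (σ | σ | σ) (τ | τ | τ) h <;>
      simp only [Sum.elim_inl, Sum.elim_inr, Subtype.mk.injEq] at h
    · exact congrArg Sum.inl (Subtype.ext h)
    · obtain ⟨z, hz⟩ := σ.2.2.2 a
      exact absurd ((congrFun h z).symm.trans hz) (hg₁a _)
    · obtain ⟨z, hz⟩ := σ.2.2.2 p₂
      exact absurd ((congrFun h z).symm.trans hz) (hg₂p _)
    · obtain ⟨z, hz⟩ := τ.2.2.2 a
      exact absurd ((congrFun h z).trans hz) (hg₁a _)
    · exact congrArg (fun s => Sum.inr (Sum.inl s))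
        (Subtype.ext (hinj₁ _ _ σ.2.1 σ.2.2 τ.2.1 τ.2.2 h))
    · obtain ⟨z, hz⟩ := τ.2.2.2 a
      have h2 := congrFun h z
      simp only [Function.comp_apply, hz, hg₂a] at h2
      exact absurd h2 (hg₁a _)
    · obtain ⟨z, hz⟩ := τ.2.2.2 p₂
      exact absurd ((congrFun h z).trans hz) (hg₂p _)
    · obtain ⟨z, hz⟩ := σ.2.2.2 a
      have h2 := congrFun h z
      simp only [Function.comp_apply, hz, hg₂a] at h2
      exact absurd h2.symm (hg₁a _)
    · exact congrArg (fun s => Sum.inr (Sum.inr s))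
        (Subtype.ext (hinj₂ _ _ σ.2.1 σ.2.2 τ.2.1 τ.2.2 h))
  have hle := Nat.card_le_card_of_injective _ hΦ
  rw [Nat.card_sum, Nat.card_sum] at hle
  omega

/-- For a finite poset `P` with a minimum element and at least three elements,
`|Aut(P)| / |End(P)| ≤ 1/3`. -/
theorem aut_le_third_end_of_bot
    (P : Type*) [PartialOrder P] [Fintype P]
    (b : P) (hb : ∀ x : P, b ≤ x) (h3 : 3 ≤ Fintype.card P) :
    3 * Nat.card {f : P → P // Monotone f ∧ Function.Bijective f}
      ≤ Nat.card {f : P → P // Monotone f} := by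
  classical
  -- every monotone bijection fixes the bottom
  have hbfix : ∀ f : P → P, Monotone f → Function.Bijective f → f b = b := by
    intro f hm hbij
    refine le_antisymm ?_ (hb _)
    obtain ⟨y, hy⟩ := hbij.2 b
    calc f b ≤ f y := hm (hb y)
    _ = b := hy
  -- minimal elements of nonempty sets
  have exmin : ∀ s : Set P, s.Nonempty → ∃ a ∈ s, ∀ z ∈ s, z ≤ a → z = a := by
    intro s hs
    obtain ⟨a, ha, hmin⟩ := (Set.toFinite s).exists_minimal hs
    exact ⟨a, ha, fun z hz hza => le_antisymm hza (hmin hz hza)⟩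
  -- find an atom a
  have hne : ({x : P | x ≠ b}).Nonempty := by
    by_contra hcon
    push_neg at hcon
    simp only [Set.eq_empty_iff_forall_notMem, Set.mem_setOf_eq, not_not,
      Set.not_nonempty_iff_eq_empty] at hcon
    have hsub : (Finset.univ : Finset P) ⊆ {b} := fun x _ => by simp [hcon x]
    have := Finset.card_le_card hsub
    simp only [Finset.card_univ, Finset.card_singleton] at this
    omega
  obtain ⟨a, ha, hamin⟩ := exmin _ hne
  have hab : a ≠ b := ha
  have hatom : ∀ z, z ≤ a → z = b ∨ z = a := by
    intro z hz
    by_cases hzb : z = b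
    · exact Or.inl hzb
    · exact Or.inr (hamin z hzb hz)
  -- the map collapsing atom a to b
  have hg₁m : Monotone (fun z => if z = a then b else z) := e_mono b a (hb a) hatom
  have hg₁a : ∀ z, (fun z => if z = a then b else z) z ≠ a := by
    intro z
    by_cases hz : z = a <;> simp [hz, Ne.symm hab]
  have hfib₁ : ∀ z, (fun z => if z = a then b else z) z
      = (fun z => if z = a then b else z) a → z = a ∨ z = b := by
    intro z hz
    simp only [if_pos rfl] at hz
    by_cases h : z = a
    · exact Or.inl h
    · right; simpa [h] using hz
  have hinjoff₁ : ∀ z w, (fun z => if z = a then b else z) z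
      = (fun z => if z = a then b else z) w → z ≠ a → w ≠ a → z = w := by
    intro z w h hz hw
    simpa [hz, hw] using h
  by_cases huniq : ∀ x : P, x ≠ b → a ≤ x
  · -- unique atom case: pick c minimal outside {a, b}
    have hcex : ({x : P | x ≠ b ∧ x ≠ a}).Nonempty := by
      by_contra hcon
      simp only [Set.not_nonempty_iff_eq_empty, Set.eq_empty_iff_forall_notMem,
        Set.mem_setOf_eq, not_and_or, not_not] at hcon
      have hsub : (Finset.univ : Finset P) ⊆ {b, a} := by
        intro x _
        rcases hcon x with h | h <;> simp [h]
      have h1 := Finset.card_le_card hsub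
      have h2 : ({b, a} : Finset P).card ≤ 2 :=
        (Finset.card_insert_le _ _).trans (by simp)
      simp only [Finset.card_univ] at h1
      omega
    obtain ⟨c, hc, hcmin⟩ := exmin _ hcex
    obtain ⟨hcb, hca⟩ := hc
    have hcatom : ∀ z, z ≤ c → z = b ∨ z = a ∨ z = c := by
      intro z hz
      by_cases hzb : z = b
      · exact Or.inl hzb
      by_cases hza : z = a
      · exact Or.inr (Or.inl hza)
      exact Or.inr (Or.inr (hcmin z ⟨hzb, hza⟩ hz))
    have hg₂m : Monotone (fun z => if z = c then a else z) := by
      intro x y hxy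
      dsimp only
      by_cases hx : x = c
      · have hcy : c ≤ y := hx.symm.le.trans hxy
        have hyb : y ≠ b := fun hyb => hcb (le_antisymm (hyb ▸ hcy) (hb _))
        have hay : a ≤ y := huniq y hyb
        by_cases hy : y = c
        · rw [if_pos hx, if_pos hy]
        · rw [if_pos hx, if_neg hy]
          exact hay
      · by_cases hy : y = c
        · rcases hcatom x (hxy.trans hy.le) with h | h | h
          · rw [if_neg hx, if_pos hy, h]
            exact hb a
          · rw [if_neg hx, if_pos hy, h]
          · exact absurd h hx
        · rw [if_neg hx, if_neg hy]
          exact hxy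
    -- automorphisms fix the unique atom a
    have hafix : ∀ f : P → P, Monotone f → Function.Bijective f → f a = a := by
      intro f hm hbij
      have hfb : f b = b := hbfix f hm hbij
      have hfa_ne : f a ≠ b := fun h => hab (hbij.1 (h.trans hfb.symm))
      refine le_antisymm ?_ (huniq _ hfa_ne)
      obtain ⟨y, hy⟩ := hbij.2 a
      have hyb : y ≠ b := fun h => hab (by rw [h, hfb] at hy; exact hy.symm)
      calc f a ≤ f y := hm (huniq y hyb)
      _ = a := hy
    refine main_aux a c _ _ hg₁m hg₂m hg₁a (by simp [Ne.symm hca]) ?_ ?_ ?_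
    · intro z
      by_cases hz : z = c <;> simp [hz, Ne.symm hca]
    · intro σ τ hσm hσ hτm hτ h
      exact comp_inj_aux _ a b hab hfib₁ hinjoff₁ σ τ hσ hτ
        (hbfix σ hσm hσ) (hbfix τ hτm hτ) h
    · intro σ τ hσm hσ hτm hτ h
      refine comp_inj_aux _ c a hca ?_ ?_ σ τ hσ hτ
        (hafix σ hσm hσ) (hafix τ hτm hτ) h
      · intro z hz
        simp only [if_pos rfl] at hz
        by_cases h' : z = c
        · exact Or.inl h'
        · right; simpa [h'] using hz
      · intro z w h' hz hw
        simpa [hz, hw] using h'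
  · -- two atoms: find a second atom a'
    push_neg at huniq
    obtain ⟨x, hxb, hxa⟩ := huniq
    have hsne : ({z : P | z ≠ b ∧ z ≤ x}).Nonempty := ⟨x, hxb, le_refl x⟩
    obtain ⟨a', ha', hamin'⟩ := exmin _ hsne
    obtain ⟨ha'b, ha'x⟩ := ha'
    have ha'a : a' ≠ a := fun h => hxa (h ▸ ha'x)
    have hatom' : ∀ z, z ≤ a' → z = b ∨ z = a' := by
      intro z hz
      by_cases hzb : z = b
      · exact Or.inl hzb
      · exact Or.inr (hamin' z ⟨hzb, hz.trans ha'x⟩ hz)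
    have hg₂m : Monotone (fun z => if z = a' then b else z) :=
      e_mono b a' (hb a') hatom'
    refine main_aux a a' _ _ hg₁m hg₂m hg₁a (by simp [Ne.symm ha'a]) ?_ ?_ ?_
    · intro z
      by_cases hz : z = a' <;> simp [hz, Ne.symm ha'b]
    · intro σ τ hσm hσ hτm hτ h
      exact comp_inj_aux _ a b hab hfib₁ hinjoff₁ σ τ hσ hτ
        (hbfix σ hσm hσ) (hbfix τ hτm hτ) h
    · intro σ τ hσm hσ hτm hτ h
      refine comp_inj_aux _ a' b ha'b ?_ ?_ σ τ hσ hτ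
        (hbfix σ hσm hσ) (hbfix τ hτm hτ) h
      · intro z hz
        simp only [if_pos rfl] at hz
        by_cases h' : z = a'
        · exact Or.inl h'
        · right; simpa [h'] using hz
      · intro z w h' hz hw
        simpa [hz, hw] using h'
end
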